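/- If M is a subclass of an AEC K closed under the zigzag-equivalence relation ≡_K, then (M, ≼_K restricted to M) is again an AEC, and LS(M) ≤ LS(K). -/
import Mathlib


open FirstOrder CategoryTheory Cardinal

/-- A bundled `L`-structure (an object of `L`-str). -/
structure Str (L : FirstOrder.Language.{0,0}) : Type 1 where
  carrier : Type
  str : L.Structure carrier

attribute [instance] Str.str

variable {L : FirstOrder.Language.{0,0}}

namespace Str

/-- The bundled structure determined by a substructure `S` of `N`. -/
def sub (N : Str L) (S : L.Substructure N.carrier) : Str L := ⟨S, inferInstance⟩

end Str

/-- `f : M → N` is a `K`-embedding (with respect to the data of a class `mem` of structures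
and a strong-substructure predicate `sle N S`, read "`S` is a `≼`-strong substructure of `N`"):
`f` factors as an isomorphism of `M` onto a strong substructure of `N` followed by the
inclusion of that substructure. -/
def IsKEmb (mem : Str L → Prop) (sle : ∀ N : Str L, L.Substructure N.carrier → Prop)
    {M N : Str L} (f : M.carrier ↪[L] N.carrier) : Prop :=
  mem M ∧ mem N ∧ ∃ (S : L.Substructure N.carrier) (e : M.carrier ≃[L] (N.sub S).carrier),
    sle N S ∧ ⇑f = Subtype.val ∘ ⇑e

/-- One step of a zigzag: a `K`-embedding in one of the two directions. -/
def ZigStep (mem : Str L → Prop) (sle : ∀ N : Str L, L.Substructure N.carrier → Prop)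
    (M N : Str L) : Prop :=
  (∃ f : M.carrier ↪[L] N.carrier, IsKEmb mem sle f) ∨
  (∃ f : N.carrier ↪[L] M.carrier, IsKEmb mem sle f)

/-- `M ≡_K N` : `M` and `N` are connected by a finite zigzag of `K`-embeddings. -/
def Conn (mem : Str L → Prop) (sle : ∀ N : Str L, L.Substructure N.carrier → Prop)
    (M N : Str L) : Prop :=
  Relation.ReflTransGen (ZigStep mem sle) M N

/-- An abstract elementary class in the language `L`, presented by the class `mem` of its
members, the strong-substructure predicate `sle`, and an explicit Löwenheim–Skolem
bound `lsBound`.  The axioms are: order, isomorphism-closure, coherence,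
unions of directed systems (with minimality below upper bounds), and Löwenheim–Skolem. -/
structure AEC (L : FirstOrder.Language.{0,0}) : Type 1 where
  mem : Str L → Prop
  sle : ∀ N : Str L, L.Substructure N.carrier → Prop
  lsBound : Cardinal.{0}
  lsBound_infinite : ℵ₀ ≤ lsBound
  sle_mem_left : ∀ {N S}, sle N S → mem (N.sub S)
  sle_mem_right : ∀ {N S}, sle N S → mem N
  refl : ∀ {N}, mem N → sle N ⊤
  /-- transitivity of `≼`: a strong substructure of a strong substructure is strong -/
  strans : ∀ {N : Str L} {S : L.Substructure N.carrier}
    (T : L.Substructure (N.sub S).carrier),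
    sle N S → sle (N.sub S) T → sle N (T.map S.subtype.toHom)
  /-- coherence: `M ⊆ N ⊆ P`, `M ≼ P`, `N ≼ P` imply `M ≼ N` -/
  coherence : ∀ {N : Str L} {S S' : L.Substructure N.carrier}, S ≤ S' →
    sle N S → sle N S' → sle (N.sub S') (S.comap S'.subtype.toHom)
  /-- closure of the class under isomorphism -/
  iso_mem : ∀ {M N : Str L}, mem M → (M.carrier ≃[L] N.carrier) → mem N
  /-- the isomorphism axiom for `≼`: images of strong substructures under isomorphisms
  of the ambient structures are strong -/
  iso_sle : ∀ {N N' : Str L} (g : N.carrier ≃[L] N'.carrier)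
    (S : L.Substructure N.carrier), sle N S → sle N' (S.map g.toEmbedding.toHom)
  /-- the union-of-chains (reunion) axiom, stated for directed systems of
  `K`-embeddings: the union (directed colimit) exists in `K`, lies above every member of
  the system, and is below every upper bound of the system -/
  chain_sup : ∀ {J : Type} [Preorder J] [Nonempty J], IsDirected J (· ≤ ·) →
    ∀ (D : J → Str L) (t : ∀ i j : J, i ≤ j → ((D i).carrier ↪[L] (D j).carrier)),
      (∀ i j h, IsKEmb mem sle (t i j h)) →
      (∀ (i j k : J) (hij : i ≤ j) (hjk : j ≤ k),
        (t j k hjk).comp (t i j hij) = t i k (le_trans hij hjk)) →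
      ∃ (Msup : Str L) (u : ∀ i, (D i).carrier ↪[L] Msup.carrier),
        (∀ i, IsKEmb mem sle (u i)) ∧
        (∀ i j (hij : i ≤ j), (u j).comp (t i j hij) = u i) ∧
        ∀ (P : Str L) (v : ∀ i, (D i).carrier ↪[L] P.carrier),
          (∀ i, IsKEmb mem sle (v i)) → (∀ i j (hij : i ≤ j), (v j).comp (t i j hij) = v i) →
          ∃ w : Msup.carrier ↪[L] P.carrier, IsKEmb mem sle w ∧ ∀ i, w.comp (u i) = v i
  /-- Löwenheim–Skolem: every subset of a member is contained in a strong substructure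
  of cardinality at most `#X + lsBound` -/
  ls : ∀ N, mem N → ∀ X : Set N.carrier,
    ∃ S : L.Substructure N.carrier, sle N S ∧ X ⊆ (S : Set N.carrier) ∧ #S ≤ #X + lsBound

/-- A subclass `P ⊆ K` closed under the zigzag-equivalence `≡_K` is,
with the restricted strong-substructure relation, again an AEC, with `LS(P) ≤ LS(K)`. -/
theorem gElementary_subclass_is_AEC (A : AEC L) (P : Str L → Prop)
    (hsub : ∀ M, P M → A.mem M)
    (hclosed : ∀ M N : Str L, P M → Conn A.mem A.sle M N → P N) :
    ∃ A' : AEC L, A'.mem = P ∧ (A'.sle = fun N S => A.sle N S ∧ P N) ∧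
      A'.lsBound = A.lsBound := by
  -- abbreviations
  set sle' : ∀ N : Str L, L.Substructure N.carrier → Prop :=
    fun N S => A.sle N S ∧ P N with hsle'
  -- from new K-embeddings to old ones
  have toA : ∀ {M N : Str L} (f : M.carrier ↪[L] N.carrier),
      IsKEmb P sle' f → IsKEmb A.mem A.sle f := by
    rintro M N f ⟨h1, h2, S, e, hS, hf⟩
    exact ⟨hsub _ h1, hsub _ h2, S, e, hS.1, hf⟩
  have ofA : ∀ {M N : Str L} (f : M.carrier ↪[L] N.carrier),
      IsKEmb A.mem A.sle f → P M → P N → IsKEmb P sle' f := by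
    rintro M N f ⟨h1, h2, S, e, hS, hf⟩ hM hN
    exact ⟨hM, hN, S, e, ⟨hS, hN⟩, hf⟩
  have stepP_fwd : ∀ {M N : Str L} (f : M.carrier ↪[L] N.carrier),
      IsKEmb A.mem A.sle f → P M → P N := fun f hf hM =>
    hclosed _ _ hM (Relation.ReflTransGen.single (Or.inl ⟨f, hf⟩))
  have stepP_bwd : ∀ {M N : Str L} (f : M.carrier ↪[L] N.carrier),
      IsKEmb A.mem A.sle f → P N → P M := fun f hf hN =>
    hclosed _ _ hN (Relation.ReflTransGen.single (Or.inr ⟨f, hf⟩))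
  -- strong substructures of members of P are in P
  have subP : ∀ {N : Str L} {S : L.Substructure N.carrier},
      P N → A.sle N S → P (N.sub S) := by
    intro N S hN hS
    refine stepP_bwd (M := N.sub S) (N := N) S.subtype
      ⟨A.sle_mem_left hS, A.sle_mem_right hS, S,
        FirstOrder.Language.Equiv.refl L (N.sub S).carrier, hS, ?_⟩ hN
    rfl
  -- P is closed under isomorphism
  have isoP : ∀ {M N : Str L}, P M → (M.carrier ≃[L] N.carrier) → P N := by
    intro M N hM g
    have hmemN : A.mem N := A.iso_mem (hsub _ hM) g
    refine stepP_fwd (M := M) (N := N) g.toEmbedding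
      ⟨hsub _ hM, hmemN, ⊤,
        (FirstOrder.Language.Substructure.topEquiv (L := L) (M := N.carrier)).symm.comp g,
        A.refl hmemN, ?_⟩ hM
    funext x
    rfl
  refine ⟨{
      mem := P
      sle := sle'
      lsBound := A.lsBound
      lsBound_infinite := A.lsBound_infinite
      sle_mem_left := fun {N S} h => subP h.2 h.1
      sle_mem_right := fun {N S} h => h.2
      refl := fun {N} h => ⟨A.refl (hsub _ h), h⟩
      strans := fun {N S} T hS hT => ⟨A.strans T hS.1 hT.1, hS.2⟩
      coherence := fun {N S S'} hle hS hS' =>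
        ⟨A.coherence hle hS.1 hS'.1, subP hS'.2 hS'.1⟩
      iso_mem := fun {M N} hM g => isoP hM g
      iso_sle := fun {N N'} g S hS => ⟨A.iso_sle g S hS.1, isoP hS.2 g⟩
      chain_sup := ?_
      ls := ?_ }, rfl, rfl, rfl⟩
  · intro J _ _ hdir D t ht hcomp
    obtain ⟨Msup, u, hu, hcommute, hmin⟩ :=
      A.chain_sup hdir D t (fun i j h => toA _ (ht i j h)) hcomp
    have hPD : ∀ i, P (D i) := fun i => (ht i i le_rfl).1
    have i0 : J := Classical.arbitrary J
    have hPM : P Msup := stepP_fwd (u i0) (hu i0) (hPD i0)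
    refine ⟨Msup, u, fun i => ofA _ (hu i) (hPD i) hPM, hcommute, ?_⟩
    intro Q v hv hvcomm
    obtain ⟨w, hw, hwc⟩ := hmin Q v (fun i => toA _ (hv i)) hvcomm
    exact ⟨w, ofA _ hw hPM (hv i0).2.1, hwc⟩
  · intro N hN X
    obtain ⟨S, hS, hX, hcard⟩ := A.ls N (hsub _ hN) X
    exact ⟨S, ⟨hS, hN⟩, hX, hcard⟩
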